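/- Let $K : [0,\infty) \to \mathbb{R}$ be continuous with $K \le 0$ and $\int_0^{\infty} t K(t)\,dt > -\infty$, and let $m$ solve $m'' + K m = 0$, $m(0)=0$, $m'(0)=1$. Then the total curvature of the associated model surface of revolution $M^*$ (with metric $dt^2 + m(t)^2 d\theta^2$) satisfies $c(M^*) = 2\pi \int_0^{\infty} K(t)\, m(t)\,dt = 2\pi(1 - \lim_{t\to\infty} m'(t))$, and in particular $2\pi - c(M^*) = 2\pi \lim_{t\to\infty} m'(t) \le 2\pi \exp\left(\int_0^{\infty}(-t K(t))\,dt\right)$. -/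

import Mathlib

open MeasureTheory Real Filter
open Topology

private lemma monoOn_aux {g g' : ℝ → ℝ} {D : Set ℝ} (hD : Convex ℝ D)
    (hD0 : D ⊆ Set.Ici 0)
    (hg : ∀ t ≥ (0:ℝ), HasDerivAt g (g' t) t)
    (hg'0 : ∀ t ∈ D, 0 ≤ g' t) : MonotoneOn g D := by
  refine monotoneOn_of_deriv_nonneg hD
    (fun t ht => (hg t (hD0 ht)).continuousAt.continuousWithinAt)
    (fun t ht => (hg t (hD0 (interior_subset ht))).differentiableAt.differentiableWithinAt) ?_
  intro t ht
  rw [(hg t (hD0 (interior_subset ht))).deriv]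
  exact hg'0 t (interior_subset ht)

/-- For the model surface of revolution `M*` with warping function `m`
solving `m'' + K m = 0`, `m(0)=0`, `m'(0)=1` (`K ≤ 0` continuous with finite
`∫₀^∞ t K(t) dt`), the total curvature `c(M*) = 2π ∫₀^∞ K(t) m(t) dt` satisfies
`c(M*) = 2π (1 - lim_{t→∞} m'(t))`, hence
`2π - c(M*) = 2π lim m' ≤ 2π exp(∫₀^∞ (-t K(t)) dt)`. -/
theorem model_total_curvature (K m : ℝ → ℝ)
    (hKcont : ContinuousOn K (Set.Ici 0))
    (hKnonpos : ∀ t ≥ (0:ℝ), K t ≤ 0)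
    (hKint : IntegrableOn (fun t => t * K t) (Set.Ici 0))
    (hODE : ∀ t ≥ (0:ℝ), HasDerivAt (deriv m) (-(K t * m t)) t)
    (hm0 : m 0 = 0) (hm'0 : deriv m 0 = 1)
    (hm' : ∀ t ≥ (0:ℝ), HasDerivAt m (deriv m t) t) :
    ∃ L : ℝ, Tendsto (deriv m) atTop (nhds L) ∧
      (2 * π) * ∫ t in Set.Ici (0:ℝ), K t * m t = 2 * π * (1 - L) ∧
      2 * π - (2 * π) * ∫ t in Set.Ici (0:ℝ), K t * m t = 2 * π * L ∧
      2 * π * L ≤ 2 * π * Real.exp (∫ t in Set.Ici (0:ℝ), -t * K t) := by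
  set f := deriv m with hfdef
  have hfc : ∀ t ≥ (0:ℝ), ContinuousAt f t := fun t ht => (hODE t ht).continuousAt
  have hmc : ∀ t ≥ (0:ℝ), ContinuousAt m t := fun t ht => (hm' t ht).continuousAt
  have hmcOn : ContinuousOn m (Set.Ici 0) := fun t ht => (hmc t ht).continuousWithinAt
  have hfcOn : ContinuousOn f (Set.Ici 0) := fun t ht => (hfc t ht).continuousWithinAt
  have hf0 : f 0 = 1 := hm'0
  -- Step 1 : m is nonnegative on [0,∞)
  have hm_nonneg : ∀ t ≥ (0:ℝ), 0 ≤ m t := by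
    by_contra h
    push_neg at h
    obtain ⟨t₁, ht₁0, ht₁⟩ := h
    set B : Set ℝ := {t | 0 ≤ t ∧ m t < 0} with hB
    have hBne : B.Nonempty := ⟨t₁, ht₁0, ht₁⟩
    have hBbd : BddBelow B := ⟨0, fun x hx => hx.1⟩
    set t₀ := sInf B with ht₀def
    have ht₀0 : 0 ≤ t₀ := le_csInf hBne fun x hx => hx.1
    have hup : ∀ s, 0 ≤ s → s < t₀ → 0 ≤ m s := by
      intro s hs0 hst
      by_contra hneg
      exact absurd (csInf_le hBbd ⟨hs0, lt_of_not_ge hneg⟩) (not_le.2 hst)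
    have hmt₀ : 0 ≤ m t₀ := by
      rcases eq_or_lt_of_le ht₀0 with h0 | h0
      · rw [← h0, hm0]
      · have htnd : Tendsto m (nhdsWithin t₀ (Set.Iio t₀)) (nhds (m t₀)) :=
          ((hmc t₀ ht₀0).continuousWithinAt).tendsto
        refine ge_of_tendsto htnd ?_
        filter_upwards [self_mem_nhdsWithin,
          mem_nhdsWithin_of_mem_nhds (Ioi_mem_nhds h0)] with s hs1 hs2
        exact hup s (le_of_lt hs2) hs1
    have hmIcc : ∀ s ∈ Set.Icc 0 t₀, 0 ≤ m s := by
      rintro s ⟨hs0, hst⟩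
      rcases lt_or_eq_of_le hst with hlt | heq
      · exact hup s hs0 hlt
      · rw [heq]; exact hmt₀
    have hfmono : MonotoneOn f (Set.Icc 0 t₀) :=
      monoOn_aux (convex_Icc 0 t₀) (fun x hx => hx.1) hODE
        (fun s hs => by nlinarith [hKnonpos s hs.1, hmIcc s hs])
    have hf1 : ∀ s ∈ Set.Icc 0 t₀, 1 ≤ f s := by
      intro s hs
      have := hfmono (Set.left_mem_Icc.2 ht₀0) hs hs.1
      rwa [hf0] at this
    have hg : MonotoneOn (fun s => m s - s) (Set.Icc 0 t₀) :=
      monoOn_aux (convex_Icc 0 t₀) (fun x hx => hx.1)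
        (g' := fun s => f s - 1)
        (fun s hs => (hm' s hs).sub (hasDerivAt_id s))
        (fun s hs => sub_nonneg.2 (hf1 s hs))
    have hmt₀' : t₀ ≤ m t₀ := by
      have := hg (Set.left_mem_Icc.2 ht₀0) (Set.right_mem_Icc.2 ht₀0) ht₀0
      simp only [hm0] at this
      linarith
    obtain ⟨δ, hδ0, hδ⟩ : ∃ δ > 0, ∀ s, t₀ < s → s < t₀ + δ → 0 < m s := by
      rcases eq_or_lt_of_le ht₀0 with h0 | h0
      · -- t₀ = 0 : use the derivative m'(0) = 1
        have hd : HasDerivAt m 1 0 := by simpa [hm'0] using hm' 0 le_rfl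
        have hslope := hasDerivAt_iff_tendsto_slope.1 hd
        have hev : ∀ᶠ s in 𝓝[≠] (0:ℝ), (1/2 : ℝ) < slope m 0 s :=
          hslope.eventually (eventually_gt_nhds (by norm_num))
        rw [eventually_nhdsWithin_iff] at hev
        obtain ⟨δ, hδ0, hball⟩ := Metric.eventually_nhds_iff.mp hev
        refine ⟨δ, hδ0, ?_⟩
        intro s hs1 hs2
        rw [← h0] at hs1 hs2
        have hsne : s ≠ 0 := ne_of_gt hs1
        have hdist : dist s 0 < δ := by
          rw [Real.dist_eq, sub_zero, abs_of_pos hs1]; linarith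
        have hsl := hball hdist hsne
        have : slope m 0 s = m s / s := by
          simp [slope_def_field, hm0]
        rw [this, lt_div_iff₀ hs1] at hsl
        linarith
      · -- t₀ > 0 : m t₀ > 0 and continuity
        have hpos : 0 < m t₀ := lt_of_lt_of_le h0 hmt₀'
        have hev : ∀ᶠ s in 𝓝 t₀, 0 < m s :=
          (hmc t₀ ht₀0).eventually (eventually_gt_nhds hpos)
        obtain ⟨δ, hδ0, hball⟩ := Metric.eventually_nhds_iff.mp hev
        refine ⟨δ, hδ0, ?_⟩
        intro s hs1 hs2
        have : dist s t₀ < δ := by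
          rw [Real.dist_eq, abs_of_pos (by linarith)]; linarith
        exact hball this
    have hlb : ∀ x ∈ B, t₀ + δ ≤ x := by
      intro x hx
      have hxt₀ : t₀ ≤ x := csInf_le hBbd hx
      by_contra hlt
      push_neg at hlt
      rcases eq_or_lt_of_le hxt₀ with he | hgt
      · rw [← he] at hx; exact absurd hmt₀ (not_le.2 hx.2)
      · exact absurd (hδ x hgt hlt) (not_lt.2 hx.2.le)
    have : t₀ + δ ≤ t₀ := le_csInf hBne hlb
    linarith
  -- Step 2 : f = m' is monotone and ≥ 1 on [0,∞)
  have hfmono : MonotoneOn f (Set.Ici 0) :=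
    monoOn_aux (convex_Ici 0) (fun x hx => hx) hODE
      (fun s hs => by nlinarith [hKnonpos s hs, hm_nonneg s hs])
  have hf1 : ∀ t ≥ (0:ℝ), 1 ≤ f t := fun t ht => by
    have := hfmono Set.self_mem_Ici ht ht
    rwa [hf0] at this
  have hfpos : ∀ t ≥ (0:ℝ), 0 < f t := fun t ht => lt_of_lt_of_le one_pos (hf1 t ht)
  -- Step 3 : m t ≤ t * f t on [0,∞)
  have hmle : ∀ t ≥ (0:ℝ), m t ≤ t * f t := by
    have hψ : MonotoneOn (fun t => t * f t - m t) (Set.Ici 0) :=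
      monoOn_aux (convex_Ici 0) (fun x hx => hx)
        (g' := fun t => t * -(K t * m t))
        (fun t ht => by
          have h2 := ((hasDerivAt_id t).mul (hODE t ht)).sub (hm' t ht)
          convert h2 using 1 <;> first | rfl | (simp only [id_eq]; ring) | (funext x; simp))
        (fun t ht => mul_nonneg ht (by nlinarith [hKnonpos t ht, hm_nonneg t ht]))
    intro t ht
    have := hψ Set.self_mem_Ici ht ht
    simp only [hm0, zero_mul, sub_zero] at this
    linarith
  -- Step 4 : Gronwall-type bound f t ≤ exp C
  set C := ∫ t in Set.Ici (0:ℝ), -t * K t with hCdef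
  have hKint' : IntegrableOn (fun t => -t * K t) (Set.Ici 0) := by
    have heq : (fun t : ℝ => -t * K t) = fun t => -(t * K t) := by funext t; ring
    rw [heq]
    exact hKint.neg
  have hlogb : ∀ t ≥ (0:ℝ), f t ≤ Real.exp C := by
    intro t ht
    have hderivlog : ∀ s ∈ Set.uIcc 0 t,
        HasDerivAt (fun u => Real.log (f u)) (-(K s * m s) / f s) s := by
      intro s hs
      rw [Set.uIcc_of_le ht] at hs
      exact (hODE s hs.1).log (ne_of_gt (hfpos s hs.1))
    have hcont1 : ContinuousOn (fun s => -(K s * m s) / f s) (Set.uIcc 0 t) := by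
      rw [Set.uIcc_of_le ht]
      refine ContinuousOn.div ?_ (hfcOn.mono Set.Icc_subset_Ici_self) ?_
      · exact ((hKcont.mono Set.Icc_subset_Ici_self).mul
          (hmcOn.mono Set.Icc_subset_Ici_self)).neg
      · intro s hs; exact ne_of_gt (hfpos s hs.1)
    have hFTC := intervalIntegral.integral_eq_sub_of_hasDerivAt hderivlog
      hcont1.intervalIntegrable
    have hint2 : IntervalIntegrable (fun s => -s * K s) volume 0 t :=
      (intervalIntegrable_iff_integrableOn_Icc_of_le ht).2
        (hKint'.mono_set Set.Icc_subset_Ici_self)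
    have hmono2 : (∫ s in (0:ℝ)..t, -(K s * m s) / f s) ≤ ∫ s in (0:ℝ)..t, -s * K s := by
      refine intervalIntegral.integral_mono_on ht hcont1.intervalIntegrable hint2 ?_
      intro s hs
      have hK := hKnonpos s hs.1
      have hfp := hfpos s hs.1
      have hms := hmle s hs.1
      rw [div_le_iff₀ hfp]
      nlinarith [mul_nonneg (neg_nonneg.2 hK) (sub_nonneg.2 hms)]
    have hmono3 : (∫ s in (0:ℝ)..t, -s * K s) ≤ C := by
      rw [intervalIntegral.integral_of_le ht]
      refine setIntegral_mono_set hKint' ?_ (HasSubset.Subset.eventuallyLE (fun x hx => le_of_lt hx.1 : Set.Ioc (0:ℝ) t ⊆ Set.Ici 0))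
      filter_upwards [ae_restrict_mem measurableSet_Ici] with s hs
      have h1 := hKnonpos s hs
      have hs' : (0:ℝ) ≤ s := hs
      simp only [Pi.zero_apply]
      nlinarith
    have hlogle : Real.log (f t) ≤ C := by
      have : Real.log (f t) - Real.log (f 0) ≤ C := hFTC ▸ le_trans hmono2 hmono3
      rw [hf0, Real.log_one] at this
      linarith
    calc f t = Real.exp (Real.log (f t)) := (Real.exp_log (hfpos t ht)).symm
      _ ≤ Real.exp C := Real.exp_le_exp.2 hlogle
  -- Step 5 : limit L of f
  set g := fun t => f (max t 0) with hgdef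
  have hgmono : Monotone g := fun a b hab =>
    hfmono (le_max_right a 0) (le_max_right b 0) (max_le_max hab le_rfl)
  have hgbdd : BddAbove (Set.range g) :=
    ⟨Real.exp C, by rintro _ ⟨x, rfl⟩; exact hlogb _ (le_max_right x 0)⟩
  have hgt : Tendsto g atTop (nhds (⨆ i, g i)) := tendsto_atTop_ciSup hgmono hgbdd
  set L := ⨆ i, g i with hLdef
  have hfeq : g =ᶠ[atTop] f := by
    filter_upwards [eventually_ge_atTop (0:ℝ)] with t ht
    simp [hgdef, max_eq_left ht]
  have hLt : Tendsto f atTop (nhds L) := hgt.congr' hfeq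
  -- Step 6 : FTC for f
  have hFTCf : ∀ t ≥ (0:ℝ), (∫ s in (0:ℝ)..t, -(K s * m s)) = f t - 1 := by
    intro t ht
    have hcont : ContinuousOn (fun s => -(K s * m s)) (Set.uIcc 0 t) := by
      rw [Set.uIcc_of_le ht]
      exact ((hKcont.mono Set.Icc_subset_Ici_self).mul
        (hmcOn.mono Set.Icc_subset_Ici_self)).neg
    have := intervalIntegral.integral_eq_sub_of_hasDerivAt
      (f := f) (fun s hs => by rw [Set.uIcc_of_le ht] at hs; exact hODE s hs.1)
      hcont.intervalIntegrable
    rw [this, hf0]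
  -- Step 7 : integrability of K·m on (0,∞)
  have hKmIoi : IntegrableOn (fun s => K s * m s) (Set.Ioi 0) := by
    refine integrableOn_Ioi_of_intervalIntegral_norm_bounded (Real.exp C - 1) 0
      (b := id) (fun i => ?_) tendsto_id ?_
    · have hc : ContinuousOn (fun s => K s * m s) (Set.Icc 0 (max 0 i)) :=
        (hKcont.mono Set.Icc_subset_Ici_self).mul (hmcOn.mono Set.Icc_subset_Ici_self)
      refine (hc.integrableOn_Icc).mono_set ?_
      intro x hx
      exact ⟨hx.1.le, hx.2.trans (le_max_right 0 i)⟩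
    · filter_upwards [eventually_ge_atTop (0:ℝ)] with i hi
      have heq : (∫ x in (0:ℝ)..(id i), ‖K x * m x‖) = ∫ x in (0:ℝ)..i, -(K x * m x) := by
        refine intervalIntegral.integral_congr ?_
        intro x hx
        simp only [id_eq] at hx
        rw [Set.uIcc_of_le hi] at hx
        show ‖K x * m x‖ = -(K x * m x)
        rw [Real.norm_eq_abs, abs_of_nonpos (mul_nonpos_of_nonpos_of_nonneg
          (hKnonpos x hx.1) (hm_nonneg x hx.1))]
      rw [heq, hFTCf i hi]
      have := hlogb i hi
      linarith
  -- Step 8 : identify the improper integral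
  have htend : Tendsto (fun t => ∫ s in (0:ℝ)..t, K s * m s) atTop
      (nhds (∫ s in Set.Ioi (0:ℝ), K s * m s)) :=
    intervalIntegral_tendsto_integral_Ioi 0 hKmIoi tendsto_id
  have htend2 : Tendsto (fun t => ∫ s in (0:ℝ)..t, K s * m s) atTop (nhds (1 - L)) := by
    have h1 : Tendsto (fun t => 1 - f t) atTop (nhds (1 - L)) := tendsto_const_nhds.sub hLt
    refine h1.congr' ?_
    filter_upwards [eventually_ge_atTop (0:ℝ)] with t ht
    have h := hFTCf t ht
    have h2 : (∫ s in (0:ℝ)..t, K s * m s) = -∫ s in (0:ℝ)..t, -(K s * m s) := by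
      rw [← intervalIntegral.integral_neg]; simp
    rw [h2, h]; ring
  have hIci_eq : (∫ s in Set.Ici (0:ℝ), K s * m s) = ∫ s in Set.Ioi (0:ℝ), K s * m s :=
    integral_Ici_eq_integral_Ioi
  have hval : (∫ s in Set.Ici (0:ℝ), K s * m s) = 1 - L := by
    rw [hIci_eq]; exact tendsto_nhds_unique htend htend2
  have hLle : L ≤ Real.exp C := by
    refine le_of_tendsto hLt ?_
    filter_upwards [eventually_ge_atTop (0:ℝ)] with t ht
    exact hlogb t ht
  refine ⟨L, hLt, ?_, ?_, ?_⟩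
  · rw [hval]
  · rw [hval]; ring
  · have h2π : (0:ℝ) ≤ 2 * π := by positivity
    exact mul_le_mul_of_nonneg_left hLle h2π
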